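/- Let μ be a finite positive Radon measure on ℝ, y(ξ) = sup{x : μ((-∞,x)) + x < ξ}, and H(ξ) = ξ - y(ξ). Then H is nondecreasing, H is Lipschitz with constant 1, lim_{ξ→-∞} H(ξ) = 0, and lim_{ξ→∞} H(ξ) = μ(ℝ). -/

import Mathlib

open MeasureTheory Filter

/-- With `y` the generalized inverse of `x ↦ μ((-∞,x)) + x` and `H = id - y`,
the function `H` is nondecreasing, Lipschitz with constant 1, tends to `0` at `-∞`
and to `μ(ℝ)` at `+∞`. -/
theorem energy_distribution_properties (μ : Measure ℝ) [IsFiniteMeasure μ]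
    (y H : ℝ → ℝ)
    (hy : ∀ ξ, y ξ = sSup {x : ℝ | (μ (Set.Iio x)).toReal + x < ξ})
    (hH : ∀ ξ, H ξ = ξ - y ξ) :
    Monotone H ∧ LipschitzWith 1 H ∧
      Tendsto H atBot (nhds 0) ∧ Tendsto H atTop (nhds (μ Set.univ).toReal) := by
  set m := (μ Set.univ).toReal with hm
  set f := fun x : ℝ => (μ (Set.Iio x)).toReal with hfdef
  have hfin : ∀ s : Set ℝ, μ s ≠ ⊤ := fun s => (measure_lt_top μ s).ne
  have hf_mono : Monotone f := fun a b hab =>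
    ENNReal.toReal_mono (hfin _) (measure_mono (Set.Iio_subset_Iio hab))
  have hf_nonneg : ∀ x, 0 ≤ f x := fun x => ENNReal.toReal_nonneg
  have hf_le : ∀ x, f x ≤ m := fun x =>
    ENNReal.toReal_mono (hfin _) (measure_mono (Set.subset_univ _))
  have hm0 : 0 ≤ m := ENNReal.toReal_nonneg
  have hne : ∀ ξ : ℝ, {x : ℝ | f x + x < ξ}.Nonempty := fun ξ =>
    ⟨ξ - m - 1, by have := hf_le (ξ - m - 1); simp only [Set.mem_setOf_eq]; linarith⟩
  have hbdd : ∀ ξ : ℝ, BddAbove {x : ℝ | f x + x < ξ} := fun ξ =>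
    ⟨ξ, fun x hx => by have := hf_nonneg x; simp only [Set.mem_setOf_eq] at hx; linarith⟩
  have hy_le : ∀ ξ, y ξ ≤ ξ := by
    intro ξ; rw [hy]
    exact csSup_le (hne ξ) fun x hx => by
      have := hf_nonneg x; simp only [Set.mem_setOf_eq] at hx; linarith
  have hy_ge : ∀ ξ, ξ - m ≤ y ξ := by
    intro ξ
    refine le_of_forall_pos_le_add fun ε hε => ?_
    have hmem : ξ - m - ε ∈ {x : ℝ | f x + x < ξ} := by
      have := hf_le (ξ - m - ε); simp only [Set.mem_setOf_eq]; linarith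
    have := le_csSup (hbdd ξ) hmem
    rw [hy]; linarith
  have hy_lip : ∀ ξ ξ' : ℝ, ξ ≤ ξ' → y ξ' ≤ y ξ + (ξ' - ξ) := by
    intro ξ ξ' hle
    rw [hy ξ']
    refine csSup_le (hne ξ') fun x hx => ?_
    simp only [Set.mem_setOf_eq] at hx
    have hmem : x - (ξ' - ξ) ∈ {z : ℝ | f z + z < ξ} := by
      have := hf_mono (show x - (ξ' - ξ) ≤ x by linarith)
      simp only [Set.mem_setOf_eq]; linarith
    have := le_csSup (hbdd ξ) hmem
    rw [hy]; linarith
  have hy_mono : Monotone y := by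
    intro ξ ξ' hle
    rw [hy, hy]
    exact csSup_le_csSup (hbdd ξ') (hne ξ)
      (fun x hx => by simp only [Set.mem_setOf_eq] at *; linarith)
  have hH_mono : Monotone H := by
    intro a b hab
    rw [hH, hH]
    have := hy_lip a b hab
    linarith
  have hH_nonneg : ∀ ξ, 0 ≤ H ξ := fun ξ => by rw [hH]; have := hy_le ξ; linarith
  have hH_le : ∀ ξ, H ξ ≤ m := fun ξ => by rw [hH]; have := hy_ge ξ; linarith
  refine ⟨hH_mono, ?_, ?_, ?_⟩
  · refine LipschitzWith.of_dist_le_mul fun a b => ?_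
    rw [Real.dist_eq, Real.dist_eq, NNReal.coe_one, one_mul, abs_le]
    rcases le_total a b with hab | hab
    · have h1 := hH_mono hab
      have h2 : H b - H a ≤ b - a := by
        rw [hH, hH]; have := hy_mono hab; linarith
      have h3 : |a - b| = b - a := by rw [abs_sub_comm]; exact abs_of_nonneg (by linarith)
      constructor <;> linarith [h3]
    · have h1 := hH_mono hab
      have h2 : H a - H b ≤ a - b := by
        rw [hH, hH]; have := hy_mono hab; linarith
      have h3 : |a - b| = a - b := abs_of_nonneg (by linarith)
      constructor <;> linarith [h3]
  · -- limit at -∞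
    have hmeas : Tendsto (fun x : ℝ => μ (Set.Iio x)) atBot (nhds 0) := by
      have h := tendsto_measure_iInter_atBot (μ := μ)
        (s := fun x : ℝ => Set.Iio x)
        (fun x => (measurableSet_Iio).nullMeasurableSet)
        (fun a b hab => Set.Iio_subset_Iio hab) ⟨0, hfin _⟩
      have : ⋂ x : ℝ, Set.Iio x = ∅ := by
        ext z; simp only [Set.mem_iInter, Set.mem_Iio, Set.mem_empty_iff_false, iff_false,
          not_forall, not_lt]
        exact ⟨z, le_refl z⟩
      rwa [this, measure_empty] at h
    have hftend : Tendsto f atBot (nhds 0) := by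
      have := (ENNReal.tendsto_toReal (by simp)).comp hmeas
      simpa [hfdef, Function.comp_def] using this
    rw [Metric.tendsto_nhds]
    intro ε hε
    have hev : ∀ᶠ x : ℝ in atBot, f x < ε / 2 :=
      hftend.eventually_lt_const (by linarith)
    rcases hev.exists with ⟨x₁, hx₁⟩
    filter_upwards [eventually_le_atBot (x₁ + ε / 2)] with ξ hξ
    have hmem : ξ - ε / 2 ∈ {z : ℝ | f z + z < ξ} := by
      have h4 : f (ξ - ε / 2) ≤ f x₁ := hf_mono (by linarith)
      simp only [Set.mem_setOf_eq]; linarith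
    have h5 : ξ - ε / 2 ≤ y ξ := by rw [hy]; exact le_csSup (hbdd ξ) hmem
    have h6 : H ξ ≤ ε / 2 := by rw [hH]; linarith
    rw [Real.dist_eq, sub_zero, abs_of_nonneg (hH_nonneg ξ)]
    linarith
  · -- limit at +∞
    have hmeasT : Tendsto (fun x : ℝ => μ (Set.Iio x)) atTop (nhds (μ Set.univ)) := by
      have : (Set.univ : Set ℝ) = ⋃ x : ℝ, Set.Iio x := by
        ext z; simp only [Set.mem_univ, Set.mem_iUnion, Set.mem_Iio, true_iff]
        exact ⟨z + 1, by linarith⟩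
      rw [this]
      exact tendsto_measure_iUnion_atTop (fun a b hab => Set.Iio_subset_Iio hab)
    have hftend : Tendsto f atTop (nhds m) :=
      (ENNReal.tendsto_toReal (hfin _)).comp hmeasT
    rw [Metric.tendsto_nhds]
    intro ε hε
    have hev : ∀ᶠ x : ℝ in atTop, m - ε / 2 < f x :=
      hftend.eventually_const_lt (by linarith)
    rcases hev.exists with ⟨x₀, hx₀⟩
    filter_upwards [eventually_ge_atTop (x₀ + m)] with ξ hξ
    have hyle : y ξ ≤ ξ - m + ε / 2 := by
      rw [hy]
      refine csSup_le (hne ξ) fun x hx => ?_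
      simp only [Set.mem_setOf_eq] at hx
      rcases le_total x x₀ with h | h
      · linarith
      · have := hf_mono h
        linarith
    have : m - ε / 2 ≤ H ξ := by rw [hH]; linarith
    rw [Real.dist_eq, abs_lt]
    have := hH_le ξ
    constructor <;> linarith
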